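/- Let P and Q be probability distributions on a finite set X × [m] and let C be an invertible m×m row-stochastic matrix with corrupted distributions P̃, Q̃ defined by passing labels through C. Then (1/8) · d_JS(P̃, Q̃)² ≤ d_JS(P, Q) ≤ ‖C⁻¹‖_∞ · sqrt(8 · d_JS(P̃, Q̃)). -/

import Mathlib

open Finset

/-- `P` is a probability distribution on `X × Fin m`. -/
def IsProbDist {X : Type*} [Fintype X] {m : ℕ} (P : X → Fin m → ℝ) : Prop :=
  (∀ x y, 0 ≤ P x y) ∧ ∑ x, ∑ y, P x y = 1

/-- Corruption of the label through a noisy channel `C`. -/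
noncomputable def corrupt {X : Type*} [Fintype X] {m : ℕ} (P : X → Fin m → ℝ)
    (C : Matrix (Fin m) (Fin m) ℝ) : X → Fin m → ℝ :=
  fun x yt => ∑ y, P x y * C y yt

/-- `C` is a row-stochastic matrix. -/
def RowStochastic {m : ℕ} (C : Matrix (Fin m) (Fin m) ℝ) : Prop :=
  (∀ i j, 0 ≤ C i j) ∧ ∀ i, ∑ j, C i j = 1

/-- Maximum absolute row sum norm `‖A‖_∞ = max_i ∑_j |A i j|`. -/
noncomputable def maxRowSum {m : ℕ} (A : Matrix (Fin m) (Fin m) ℝ) : ℝ :=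
  ⨆ i, ∑ j, |A i j|

/-- Kullback-Leibler divergence on the finite set `X × Fin m`. -/
noncomputable def klDiv {X : Type*} [Fintype X] {m : ℕ} (P Q : X → Fin m → ℝ) : ℝ :=
  ∑ x, ∑ y, P x y * Real.log (P x y / Q x y)

/-- Jensen-Shannon divergence on the finite set `X × Fin m`. -/
noncomputable def jsDiv {X : Type*} [Fintype X] {m : ℕ} (P Q : X → Fin m → ℝ) : ℝ :=
  (1 / 2) * klDiv P (fun x y => (P x y + Q x y) / 2) +
  (1 / 2) * klDiv Q (fun x y => (P x y + Q x y) / 2)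

-- (1-t) e^{2t} ≤ 1+t for t ≥ 0
lemma aux_exp (t : ℝ) (ht : 0 ≤ t) : (1 - t) * Real.exp (2 * t) ≤ 1 + t := by
  have key : ∀ s : ℝ, 0 ≤ s → (1 + s) - (1 - s) * Real.exp (2 * s) ≥ 0 := by
    intro s hs
    have h0 : (fun u : ℝ => (1 + u) - (1 - u) * Real.exp (2 * u)) 0 = 0 := by simp
    have hmono : MonotoneOn (fun u : ℝ => (1 + u) - (1 - u) * Real.exp (2 * u)) (Set.Ici 0) := by
      apply monotoneOn_of_deriv_nonneg (convex_Ici 0)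
      · fun_prop
      · fun_prop
      · intro u hu
        have hd : HasDerivAt (fun u : ℝ => (1 + u) - (1 - u) * Real.exp (2 * u))
            (1 - ((-1) * Real.exp (2 * u) + (1 - u) * (Real.exp (2 * u) * 2))) u := by
          have h1 : HasDerivAt (fun u : ℝ => Real.exp (2 * u)) (Real.exp (2 * u) * 2) u := by
            simpa [Function.comp_def] using (Real.hasDerivAt_exp (2*u)).comp u ((hasDerivAt_id u).const_mul 2)
          exact ((hasDerivAt_id u).const_add 1).sub
            ((((hasDerivAt_id u).neg.const_add 1)).mul h1)
        rw [hd.deriv]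
        have := Real.add_one_le_exp (-(2*u))
        have hep : 0 < Real.exp (2*u) := Real.exp_pos _
        have h2 : (1 - 2*u) * Real.exp (2*u) ≤ 1 := by
          have : (1 - 2*u) ≤ Real.exp (-(2*u)) := by linarith
          calc (1 - 2*u) * Real.exp (2*u) ≤ Real.exp (-(2*u)) * Real.exp (2*u) :=
                mul_le_mul_of_nonneg_right this hep.le
            _ = 1 := by rw [← Real.exp_add]; simp
        nlinarith
    have := hmono (Set.mem_Ici.2 le_rfl) (Set.mem_Ici.2 hs) hs
    rw [h0] at this; simpa using this
  linarith [key t ht]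

-- artanh t ≥ t : 2t ≤ log(1+t) - log(1-t) for 0 ≤ t < 1
lemma aux_artanh (t : ℝ) (h0 : 0 ≤ t) (h1 : t < 1) :
    2 * t ≤ Real.log (1 + t) - Real.log (1 - t) := by
  have h1t : (0:ℝ) < 1 - t := by linarith
  have h2 : (1 - t) * Real.exp (2 * t) ≤ 1 + t := aux_exp t h0
  have h3 : Real.exp (2 * t) ≤ (1 + t) / (1 - t) := by
    rw [le_div_iff₀ h1t]; linarith [h2]
  have h4 := Real.log_le_log (Real.exp_pos _) h3
  rw [Real.log_exp, Real.log_div (by linarith) (by linarith)] at h4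
  linarith

-- core: t² ≤ (1+t)log(1+t) + (1-t)log(1-t) for |t| ≤ 1
lemma aux_core (t : ℝ) (h : |t| ≤ 1) :
    t ^ 2 ≤ (1 + t) * Real.log (1 + t) + (1 - t) * Real.log (1 - t) := by
  -- reduce to t ∈ [0,1]
  rcases abs_le.1 h with ⟨hm, hp⟩
  have main : ∀ s : ℝ, 0 ≤ s → s ≤ 1 →
      s ^ 2 ≤ (1 + s) * Real.log (1 + s) + (1 - s) * Real.log (1 - s) := by
    intro s hs0 hs1
    rcases eq_or_lt_of_le hs1 with rfl | hs1
    · norm_num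
      nlinarith [Real.log_two_gt_d9]
    · set F : ℝ → ℝ := fun u => (1 + u) * Real.log (1 + u) + (1 - u) * Real.log (1 - u) - u ^ 2
        with hF
      have hmono : MonotoneOn F (Set.Ico 0 1) := by
        have hder : ∀ u ∈ Set.Ico (0:ℝ) 1, HasDerivAt F
            (Real.log (1 + u) - Real.log (1 - u) - 2 * u) u := by
          intro u hu
          obtain ⟨hu0, hu1⟩ := hu
          have hu1' : (0:ℝ) < 1 - u := by linarith
          have hu0' : (0:ℝ) < 1 + u := by linarith
          have d1 : HasDerivAt (fun u : ℝ => (1 + u) * Real.log (1 + u))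
              (1 * Real.log (1 + u) + (1 + u) * (1 / (1 + u))) u := by
            have : HasDerivAt (fun u : ℝ => Real.log (1 + u)) (1 / (1 + u)) u := by
              simpa [Function.comp_def] using (Real.hasDerivAt_log hu0'.ne').comp u ((hasDerivAt_id u).const_add 1)
            exact ((hasDerivAt_id u).const_add 1).mul this
          have d2 : HasDerivAt (fun u : ℝ => (1 - u) * Real.log (1 - u))
              ((-1) * Real.log (1 - u) + (1 - u) * ((-1) / (1 - u))) u := by
            have : HasDerivAt (fun u : ℝ => Real.log (1 - u)) ((-1) / (1 - u)) u := by
              have h' : HasDerivAt (fun u : ℝ => 1 - u) (-1) u := by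
                exact (hasDerivAt_id' u).const_sub 1
              simpa [div_eq_mul_inv, Function.comp_def] using (Real.hasDerivAt_log hu1'.ne').comp u h'
            exact (((hasDerivAt_id u).neg.const_add 1)).mul this
          have d3 : HasDerivAt (fun u : ℝ => u ^ 2) (2 * u) u := by
            simpa [mul_comm] using hasDerivAt_pow 2 u
          have := (d1.add d2).sub d3
          refine this.congr_deriv ?_
          rw [mul_one_div_cancel hu0'.ne', mul_div_assoc', mul_comm (1 - u) (-1), mul_div_assoc,
            div_self hu1'.ne']
          ring
        apply monotoneOn_of_deriv_nonneg (convex_Ico 0 1)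
        · intro u hu
          exact ContinuousAt.continuousWithinAt (hder u hu).continuousAt
        · intro u hu
          rw [interior_Ico] at hu
          exact (hder u ⟨hu.1.le, hu.2⟩).differentiableAt.differentiableWithinAt
        · intro u hu
          rw [interior_Ico] at hu
          obtain ⟨hu0, hu1⟩ := hu
          rw [((hder u ⟨hu0.le, hu1⟩).deriv)]
          have := aux_artanh u hu0.le hu1
          linarith
      have h0 : F 0 = 0 := by simp [hF]
      have := hmono (Set.mem_Ico.2 ⟨le_refl 0, one_pos⟩) (Set.mem_Ico.2 ⟨hs0, hs1⟩) hs0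
      rw [h0] at this
      simp only [hF] at this
      linarith
  rcases le_or_gt 0 t with ht | ht
  · exact main t ht hp
  · have := main (-t) (by linarith) (by linarith)
    have e : (1 + -t) = 1 - t := by ring
    have e2 : (1 - -t) = 1 + t := by ring
    rw [e, e2] at this
    nlinarith [this]

-- lower pointwise: (a-b)²/(a+b) ≤ 2(a log(a/((a+b)/2)) + b log(b/((a+b)/2)))
lemma aux_point_lower (a b : ℝ) (ha : 0 ≤ a) (hb : 0 ≤ b) :
    (a - b) ^ 2 / (a + b) ≤
      2 * (a * Real.log (a / ((a + b) / 2)) + b * Real.log (b / ((a + b) / 2))) := by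
  rcases eq_or_lt_of_le (add_nonneg ha hb) with hs | hs
  · have ha0 : a = 0 := by linarith
    have hb0 : b = 0 := by linarith
    simp [ha0, hb0]
  · set s := a + b with hsdef
    set t := (a - b) / s with htdef
    have hts : a - b = t * s := by rw [htdef, div_mul_cancel₀ _ hs.ne']
    have h1t : a / (s / 2) = 1 + t := by field_simp [htdef]; linarith [hts, hsdef]
    have h2t : b / (s / 2) = 1 - t := by field_simp [htdef]; linarith [hts, hsdef]
    have habs : |t| ≤ 1 := by
      rw [abs_div, abs_of_pos hs, div_le_one hs]
      rw [abs_le]; constructor <;> linarith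
    have hcore := aux_core t habs
    have hA : a = s * (1 + t) / 2 := by field_simp [htdef]; linarith [hts, hsdef]
    have hB : b = s * (1 - t) / 2 := by field_simp [htdef]; linarith [hts, hsdef]
    rw [h1t, h2t]
    have : (a - b) ^ 2 / (a + b) = s * t ^ 2 := by
      rw [hts, ← hsdef, div_eq_iff hs.ne']; ring
    rw [this, hA, hB]
    have := mul_le_mul_of_nonneg_left hcore hs.le
    nlinarith [this]

-- upper pointwise: (1/2)(a log(a/((a+b)/2)) + b log(b/((a+b)/2))) ≤ |a-b|
lemma aux_point_upper (a b : ℝ) (ha : 0 ≤ a) (hb : 0 ≤ b) :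
    (1/2) * (a * Real.log (a / ((a + b) / 2))) + (1/2) * (b * Real.log (b / ((a + b) / 2)))
      ≤ |a - b| := by
  rcases eq_or_lt_of_le (add_nonneg ha hb) with hs | hs
  · have ha0 : a = 0 := by linarith
    have hb0 : b = 0 := by linarith
    simp [ha0, hb0]
  · have key : ∀ c d : ℝ, 0 ≤ c → 0 ≤ d → c + d = a + b →
        c * Real.log (c / ((a + b) / 2)) ≤ c * (c - d) / (a+b) := by
      intro c d hc hd hcd
      rcases eq_or_lt_of_le hc with rfl | hc'
      · simp
      · have hx : 0 < c / ((a + b) / 2) := by positivity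
        have := Real.log_le_sub_one_of_pos hx
        have h2 : c * Real.log (c / ((a+b)/2)) ≤ c * (c / ((a+b)/2) - 1) :=
          mul_le_mul_of_nonneg_left this hc
        calc c * Real.log (c / ((a+b)/2)) ≤ c * (c / ((a+b)/2) - 1) := h2
          _ = c * (c - d) / (a+b) := by
              have hd' : d = a + b - c := by linarith
              subst hd'
              have hs' : (a+b) ≠ 0 := by linarith
              field_simp
              ring_nf
    have k1 := key a b ha hb rfl
    have k2 := key b a hb ha (by ring)
    have habs : a * (a - b) / (a+b) + b * (b - a) / (a+b) = (a-b)^2 / (a+b) := by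
      field_simp; ring
    have hle : (a-b)^2 / (a+b) ≤ 2 * |a - b| := by
      rw [div_le_iff₀ (by linarith)]
      have h1 : |a - b| ≤ a + b := by
        rw [abs_le]; constructor <;> linarith
      have h2 : (a-b)^2 = |a-b|^2 := (sq_abs _).symm
      nlinarith [abs_nonneg (a-b)]
    linarith


lemma aux_jsDiv_eq {X : Type*} [Fintype X] {m : ℕ} (A B : X → Fin m → ℝ) :
    jsDiv A B = ∑ x, ∑ y,
      ((1/2) * (A x y * Real.log (A x y / ((A x y + B x y) / 2))) +
       (1/2) * (B x y * Real.log (B x y / ((A x y + B x y) / 2)))) := by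
  simp only [jsDiv, klDiv, Finset.mul_sum, ← Finset.sum_add_distrib]

lemma aux_upper {X : Type*} [Fintype X] {m : ℕ} (A B : X → Fin m → ℝ)
    (hA : ∀ x y, 0 ≤ A x y) (hB : ∀ x y, 0 ≤ B x y) :
    jsDiv A B ≤ ∑ x, ∑ y, |A x y - B x y| := by
  rw [aux_jsDiv_eq]
  refine Finset.sum_le_sum fun x _ => Finset.sum_le_sum fun y _ => ?_
  exact aux_point_upper (A x y) (B x y) (hA x y) (hB x y)

lemma aux_pinsker {X : Type*} [Fintype X] {m : ℕ} (A B : X → Fin m → ℝ)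
    (hA : IsProbDist A) (hB : IsProbDist B) :
    (∑ x, ∑ y, |A x y - B x y|) ^ 2 ≤ 8 * jsDiv A B := by
  have key := Finset.sum_sq_le_sum_mul_sum_of_sq_eq_mul
    (Finset.univ : Finset (X × Fin m))
    (r := fun p => |A p.1 p.2 - B p.1 p.2|)
    (f := fun p => A p.1 p.2 + B p.1 p.2)
    (g := fun p => (A p.1 p.2 - B p.1 p.2) ^ 2 / (A p.1 p.2 + B p.1 p.2))
    (fun p _ => add_nonneg (hA.1 p.1 p.2) (hB.1 p.1 p.2))
    (fun p _ => div_nonneg (sq_nonneg _) (add_nonneg (hA.1 p.1 p.2) (hB.1 p.1 p.2)))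
    (fun p _ => by
      rcases eq_or_lt_of_le (add_nonneg (hA.1 p.1 p.2) (hB.1 p.1 p.2)) with hs | hs
      · have h1 : A p.1 p.2 = 0 := by
          have := hA.1 p.1 p.2; have := hB.1 p.1 p.2; linarith
        have h2 : B p.1 p.2 = 0 := by
          have := hA.1 p.1 p.2; have := hB.1 p.1 p.2; linarith
        simp [h1, h2]
      · rw [sq_abs]
        field_simp)
  have hf : ∑ p : X × Fin m, (A p.1 p.2 + B p.1 p.2) = 2 := by
    rw [Finset.sum_add_distrib]
    rw [Fintype.sum_prod_type]
    rw [Fintype.sum_prod_type]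
    rw [hA.2, hB.2]; norm_num
  have hr : ∑ p : X × Fin m, |A p.1 p.2 - B p.1 p.2| = ∑ x, ∑ y, |A x y - B x y| := by
    rw [Fintype.sum_prod_type]
  have hg : ∑ p : X × Fin m, (A p.1 p.2 - B p.1 p.2) ^ 2 / (A p.1 p.2 + B p.1 p.2)
      ≤ 4 * jsDiv A B := by
    rw [aux_jsDiv_eq, Fintype.sum_prod_type]
    simp only [Finset.mul_sum]
    refine Finset.sum_le_sum fun x _ => Finset.sum_le_sum fun y _ => ?_
    have := aux_point_lower (A x y) (B x y) (hA.1 x y) (hB.1 x y)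
    linarith
  rw [hr, hf] at key
  calc (∑ x, ∑ y, |A x y - B x y|) ^ 2
      ≤ 2 * ∑ p : X × Fin m, (A p.1 p.2 - B p.1 p.2) ^ 2 / (A p.1 p.2 + B p.1 p.2) := key
    _ ≤ 2 * (4 * jsDiv A B) := by linarith
    _ = 8 * jsDiv A B := by ring

lemma aux_corrupt_prob {X : Type*} [Fintype X] {m : ℕ} (P : X → Fin m → ℝ)
    (hP : IsProbDist P) (C : Matrix (Fin m) (Fin m) ℝ) (hC : RowStochastic C) :
    IsProbDist (corrupt P C) := by
  constructor
  · intro x yt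
    exact Finset.sum_nonneg fun y _ => mul_nonneg (hP.1 x y) (hC.1 y yt)
  · calc ∑ x, ∑ yt, corrupt P C x yt
        = ∑ x, ∑ y, P x y * ∑ yt, C y yt := by
          refine Finset.sum_congr rfl fun x _ => ?_
          simp only [corrupt]
          rw [Finset.sum_comm]
          exact Finset.sum_congr rfl fun y _ => by rw [← Finset.mul_sum]
      _ = 1 := by
          simp only [hC.2, mul_one]
          exact hP.2

lemma aux_dp {X : Type*} [Fintype X] {m : ℕ} (P Q : X → Fin m → ℝ)
    (C : Matrix (Fin m) (Fin m) ℝ) (hC : RowStochastic C) :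
    ∑ x, ∑ yt, |corrupt P C x yt - corrupt Q C x yt| ≤ ∑ x, ∑ y, |P x y - Q x y| := by
  refine Finset.sum_le_sum fun x _ => ?_
  calc ∑ yt, |corrupt P C x yt - corrupt Q C x yt|
      = ∑ yt, |∑ y, (P x y - Q x y) * C y yt| := by
        refine Finset.sum_congr rfl fun yt _ => ?_
        congr 1
        simp only [corrupt, ← Finset.sum_sub_distrib]
        exact Finset.sum_congr rfl fun y _ => by ring
    _ ≤ ∑ yt, ∑ y, |P x y - Q x y| * C y yt := by
        refine Finset.sum_le_sum fun yt _ => ?_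
        refine (Finset.abs_sum_le_sum_abs _ _).trans ?_
        refine Finset.sum_le_sum fun y _ => ?_
        rw [abs_mul, abs_of_nonneg (hC.1 y yt)]
    _ = ∑ y, |P x y - Q x y| * ∑ yt, C y yt := by
        rw [Finset.sum_comm]
        exact Finset.sum_congr rfl fun y _ => (Finset.mul_sum _ _ _).symm
    _ = ∑ y, |P x y - Q x y| := by simp [hC.2]

lemma aux_recover {X : Type*} [Fintype X] {m : ℕ} (P : X → Fin m → ℝ)
    (C Cinv : Matrix (Fin m) (Fin m) ℝ) (hCinv₁ : C * Cinv = 1) :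
    ∀ x y', P x y' = ∑ yt, corrupt P C x yt * Cinv yt y' := by
  intro x y'
  symm
  calc ∑ yt, corrupt P C x yt * Cinv yt y'
      = ∑ yt, ∑ y, P x y * C y yt * Cinv yt y' := by
        refine Finset.sum_congr rfl fun yt _ => ?_
        simp only [corrupt, Finset.sum_mul]
    _ = ∑ y, P x y * ∑ yt, C y yt * Cinv yt y' := by
        rw [Finset.sum_comm]
        refine Finset.sum_congr rfl fun y _ => ?_
        rw [Finset.mul_sum]
        exact Finset.sum_congr rfl fun yt _ => by ring
    _ = ∑ y, P x y * (C * Cinv) y y' := by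
        refine Finset.sum_congr rfl fun y _ => ?_
        rw [Matrix.mul_apply]
    _ = P x y' := by
        rw [hCinv₁]
        simp [Matrix.one_apply]

lemma aux_inv {X : Type*} [Fintype X] {m : ℕ} (P Q : X → Fin m → ℝ)
    (C Cinv : Matrix (Fin m) (Fin m) ℝ) (hCinv₁ : C * Cinv = 1) :
    ∑ x, ∑ y, |P x y - Q x y| ≤
      maxRowSum Cinv * ∑ x, ∑ yt, |corrupt P C x yt - corrupt Q C x yt| := by
  have hbdd : BddAbove (Set.range fun i => ∑ j, |Cinv i j|) := Set.Finite.bddAbove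
    (Set.finite_range _)
  have hrow : ∀ yt : Fin m, ∑ y, |Cinv yt y| ≤ maxRowSum Cinv := fun yt =>
    le_ciSup hbdd yt
  calc ∑ x, ∑ y, |P x y - Q x y|
      = ∑ x, ∑ y, |∑ yt, (corrupt P C x yt - corrupt Q C x yt) * Cinv yt y| := by
        refine Finset.sum_congr rfl fun x _ => Finset.sum_congr rfl fun y _ => ?_
        congr 1
        rw [aux_recover P C Cinv hCinv₁ x y, aux_recover Q C Cinv hCinv₁ x y,
          ← Finset.sum_sub_distrib]
        exact Finset.sum_congr rfl fun yt _ => by ring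
    _ ≤ ∑ x, ∑ y, ∑ yt, |corrupt P C x yt - corrupt Q C x yt| * |Cinv yt y| := by
        refine Finset.sum_le_sum fun x _ => Finset.sum_le_sum fun y _ => ?_
        refine (Finset.abs_sum_le_sum_abs _ _).trans ?_
        exact Finset.sum_le_sum fun yt _ => le_of_eq (abs_mul _ _)
    _ = ∑ x, ∑ yt, |corrupt P C x yt - corrupt Q C x yt| * ∑ y, |Cinv yt y| := by
        refine Finset.sum_congr rfl fun x _ => ?_
        rw [Finset.sum_comm]
        exact Finset.sum_congr rfl fun yt _ => (Finset.mul_sum _ _ _).symm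
    _ ≤ ∑ x, ∑ yt, |corrupt P C x yt - corrupt Q C x yt| * maxRowSum Cinv := by
        refine Finset.sum_le_sum fun x _ => Finset.sum_le_sum fun yt _ => ?_
        exact mul_le_mul_of_nonneg_left (hrow yt) (abs_nonneg _)
    _ = maxRowSum Cinv * ∑ x, ∑ yt, |corrupt P C x yt - corrupt Q C x yt| := by
        rw [Finset.mul_sum]
        refine Finset.sum_congr rfl fun x _ => ?_
        rw [Finset.mul_sum]
        exact Finset.sum_congr rfl fun yt _ => by ring

theorem jsDiv_corrupt_bounds {X : Type*} [Fintype X] {m : ℕ}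
    (P Q : X → Fin m → ℝ) (hP : IsProbDist P) (hQ : IsProbDist Q)
    (C Cinv : Matrix (Fin m) (Fin m) ℝ) (hC : RowStochastic C)
    (hCinv₁ : C * Cinv = 1) (hCinv₂ : Cinv * C = 1) :
    (1 / 8) * jsDiv (corrupt P C) (corrupt Q C) ^ 2 ≤ jsDiv P Q ∧
    jsDiv P Q ≤ maxRowSum Cinv * Real.sqrt (8 * jsDiv (corrupt P C) (corrupt Q C)) := by
  rcases Nat.eq_zero_or_pos m with rfl | hm
  · exfalso
    have := hP.2
    simp at this
  have hPt : IsProbDist (corrupt P C) := aux_corrupt_prob P hP C hC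
  have hQt : IsProbDist (corrupt Q C) := aux_corrupt_prob Q hQ C hC
  set D := ∑ x, ∑ y, |P x y - Q x y| with hD
  set Dt := ∑ x, ∑ yt, |corrupt P C x yt - corrupt Q C x yt| with hDt
  have hD0 : 0 ≤ D := Finset.sum_nonneg fun x _ => Finset.sum_nonneg fun y _ => abs_nonneg _
  have hDt0 : 0 ≤ Dt := Finset.sum_nonneg fun x _ => Finset.sum_nonneg fun y _ => abs_nonneg _
  have h1 : jsDiv (corrupt P C) (corrupt Q C) ≤ Dt := aux_upper _ _ hPt.1 hQt.1
  have h2 : Dt ≤ D := aux_dp P Q C hC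
  have h3 : D ^ 2 ≤ 8 * jsDiv P Q := aux_pinsker P Q hP hQ
  have h4 : Dt ^ 2 ≤ 8 * jsDiv (corrupt P C) (corrupt Q C) := aux_pinsker _ _ hPt hQt
  have h5 : jsDiv P Q ≤ D := aux_upper P Q hP.1 hQ.1
  have h6 : D ≤ maxRowSum Cinv * Dt := aux_inv P Q C Cinv hCinv₁
  have hJt0 : 0 ≤ jsDiv (corrupt P C) (corrupt Q C) := by nlinarith [sq_nonneg Dt]
  have hM0 : 0 ≤ maxRowSum Cinv := by
    have hbdd : BddAbove (Set.range fun i => ∑ j, |Cinv i j|) := Set.Finite.bddAbove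
      (Set.finite_range _)
    have := le_ciSup hbdd (⟨0, hm⟩ : Fin m)
    refine le_trans ?_ this
    exact Finset.sum_nonneg fun j _ => abs_nonneg _
  constructor
  · nlinarith
  · have hs : Dt ≤ Real.sqrt (8 * jsDiv (corrupt P C) (corrupt Q C)) := by
      rw [Real.le_sqrt hDt0 (by positivity)]
      exact h4
    have : maxRowSum Cinv * Dt ≤ maxRowSum Cinv *
        Real.sqrt (8 * jsDiv (corrupt P C) (corrupt Q C)) :=
      mul_le_mul_of_nonneg_left hs hM0
    linarith
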